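/- arXiv:2304.14647 — 2 statements merged into one kernel-verified Lean document; each statement's English description precedes it below -/
import Mathlib

section
/- Suppose f is β-smooth, ρ < 1/(2β), η < 1/β, and a sequence satisfies w_{t+1} = w_t - η((1-ξ_t)∇f(w_t) + ξ_t ∇f(w_t + ρ∇f(w_t))) with ξ_t ∈ {0,1}. Then for each t, f(w_{t+1}) ≤ f(w_t) - η(1 - βη/2 - βρ ξ_t)||∇f(w_t)||². -/
open RealInnerProductSpace

lemma smooth_descent_aux {E : Type*} [NormedAddCommGroup E] [InnerProductSpace ℝ E]
    [CompleteSpace E] (f : E → ℝ) (f' : E → E)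
    (hgrad : ∀ w, HasGradientAt f (f' w) w) (β : ℝ) (hβ : 0 ≤ β)
    (hlip : ∀ w v, ‖f' w - f' v‖ ≤ β * ‖w - v‖) (x y : E) :
    f y ≤ f x + ⟪f' x, y - x⟫ + β / 2 * ‖y - x‖ ^ 2 := by
  set φ : ℝ → ℝ := fun t => β * t ^ 2 / 2 * ‖y - x‖ ^ 2 + t * ⟪f' x, y - x⟫
      - f (x + t • (y - x)) with hφ
  have hder : ∀ t : ℝ, HasDerivAt φ
      (β * t * ‖y - x‖ ^ 2 + ⟪f' x, y - x⟫ - ⟪f' (x + t • (y - x)), y - x⟫) t := by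
    intro t
    have hc : HasDerivAt (fun t : ℝ => x + t • (y - x)) (y - x) t := by
      simpa using ((hasDerivAt_id t).smul_const (y - x)).const_add x
    have hf : HasDerivAt (fun t : ℝ => f (x + t • (y - x)))
        (⟪f' (x + t • (y - x)), y - x⟫) t := by
      have := (hgrad (x + t • (y - x))).hasFDerivAt.comp_hasDerivAt t hc
      simpa [InnerProductSpace.toDual_apply_apply, Function.comp_def] using this
    have h1 : HasDerivAt (fun t : ℝ => β * t ^ 2 / 2 * ‖y - x‖ ^ 2 + t * ⟪f' x, y - x⟫)
        (β * t * ‖y - x‖ ^ 2 + ⟪f' x, y - x⟫) t := by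
      have h2 : HasDerivAt (fun t : ℝ => β * t ^ 2 / 2 * ‖y - x‖ ^ 2 + t * ⟪f' x, y - x⟫)
          (β * (2 * t) / 2 * ‖y - x‖ ^ 2 + 1 * ⟪f' x, y - x⟫) t := by
        have := (((hasDerivAt_pow 2 t).const_mul β).div_const 2 |>.mul_const
          (‖y - x‖ ^ 2)).add ((hasDerivAt_id t).mul_const (⟪f' x, y - x⟫))
        simpa [Pi.add_def] using this
      convert h2 using 1
      ring
    exact h1.sub hf
  have hmono : MonotoneOn φ (Set.Ici (0 : ℝ)) := by
    apply monotoneOn_of_deriv_nonneg (convex_Ici 0)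
    · exact fun t _ => ((hder t).continuousAt).continuousWithinAt
    · intro t _
      exact ((hder t).differentiableAt).differentiableWithinAt
    · intro t ht
      rw [interior_Ici] at ht
      rw [(hder t).deriv]
      have hcs : ⟪f' (x + t • (y - x)) - f' x, y - x⟫ ≤
          ‖f' (x + t • (y - x)) - f' x‖ * ‖y - x‖ := real_inner_le_norm _ _
      have hl := hlip (x + t • (y - x)) x
      have hts : ‖x + t • (y - x) - x‖ = t * ‖y - x‖ := by
        rw [add_sub_cancel_left, norm_smul, Real.norm_eq_abs, abs_of_pos ht]
      rw [hts] at hl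
      have hexp : ⟪f' (x + t • (y - x)) - f' x, y - x⟫ =
          ⟪f' (x + t • (y - x)), y - x⟫ - ⟪f' x, y - x⟫ := by
        rw [inner_sub_left]
      have ht' : (0:ℝ) < t := ht
      nlinarith [norm_nonneg (f' (x + t • (y - x)) - f' x), norm_nonneg (y - x),
        mul_le_mul_of_nonneg_right hl (norm_nonneg (y - x))]
  have h01 : φ 0 ≤ φ 1 := hmono (by norm_num) (by norm_num) (by norm_num)
  simp only [hφ] at h01
  norm_num at h01
  linarith

set_option maxHeartbeats 1000000 in
/-- Per-step descent for the mixed SAM/ERM full-batch update. -/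
theorem mixed_sam_erm_descent_step
    {d : ℕ} (f : EuclideanSpace ℝ (Fin d) → ℝ)
    (f' : EuclideanSpace ℝ (Fin d) → EuclideanSpace ℝ (Fin d))
    (hgrad : ∀ w, HasGradientAt f (f' w) w)
    (β η ρ : ℝ) (hβ : 0 < β) (hη : 0 < η) (hρ : 0 < ρ)
    (hηβ : η < 1 / β) (hρβ : ρ < 1 / (2 * β))
    (hlip : ∀ w v, ‖f' w - f' v‖ ≤ β * ‖w - v‖)
    (w : ℕ → EuclideanSpace ℝ (Fin d)) (ξ : ℕ → ℝ)
    (hξ : ∀ t, ξ t = 0 ∨ ξ t = 1)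
    (hupd : ∀ t, w (t + 1) =
      w t - η • ((1 - ξ t) • f' (w t) + ξ t • f' (w t + ρ • f' (w t)))) :
    ∀ t, f (w (t + 1)) ≤
      f (w t) - η * (1 - β * η / 2 - β * ρ * ξ t) * ‖f' (w t)‖ ^ 2 := by
  have descent := smooth_descent_aux f f' hgrad β hβ.le hlip
  intro t
  have hβη : β * η < 1 := by
    rw [lt_div_iff₀ hβ] at hηβ; linarith
  have hβρ : 2 * β * ρ < 1 := by
    rw [lt_div_iff₀ (by positivity)] at hρβ; linarith
  set x := w t with hx
  set g := f' x with hg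
  rcases hξ t with h0 | h1
  · have hy : w (t + 1) = x - η • g := by
      rw [hupd t, h0]; simp; rfl
    have hdesc := descent x (w (t + 1))
    rw [← hg] at hdesc
    rw [hy] at hdesc ⊢
    have he : (x - η • g) - x = -(η • g) := by abel
    rw [he, inner_neg_right, inner_smul_right, real_inner_self_eq_norm_sq,
      norm_neg, norm_smul, Real.norm_eq_abs, abs_of_pos hη, mul_pow] at hdesc
    rw [h0]
    nlinarith [hdesc]
  · set g' := f' (x + ρ • g) with hg'
    have hy : w (t + 1) = x - η • g' := by
      rw [hupd t, h1]; simp; rfl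
    have hdesc := descent x (w (t + 1))
    rw [← hg] at hdesc
    rw [hy] at hdesc ⊢
    have he : (x - η • g') - x = -(η • g') := by abel
    rw [he, inner_neg_right, inner_smul_right, norm_neg, norm_smul,
      Real.norm_eq_abs, abs_of_pos hη, mul_pow] at hdesc
    have hδ : ‖g' - g‖ ≤ β * ρ * ‖g‖ := by
      have := hlip (x + ρ • g) x
      rw [add_sub_cancel_left, norm_smul, Real.norm_eq_abs, abs_of_pos hρ] at this
      linarith [this]
    have hcs : |⟪g, g' - g⟫| ≤ ‖g‖ * ‖g' - g‖ := abs_real_inner_le_norm _ _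
    have hip : ⟪g, g'⟫ = ‖g‖ ^ 2 + ⟪g, g' - g⟫ := by
      rw [inner_sub_right, real_inner_self_eq_norm_sq]; ring
    have hn2 : ‖g'‖ ^ 2 = ‖g‖ ^ 2 + 2 * ⟪g, g' - g⟫ + ‖g' - g‖ ^ 2 := by
      have hgg : g + (g' - g) = g' := by abel
      have := norm_add_sq_real g (g' - g)
      rw [hgg] at this
      linarith
    rw [h1]
    rw [hip, hn2] at hdesc
    rw [abs_le] at hcs
    have hgn : (0:ℝ) ≤ ‖g‖ := norm_nonneg _
    have hδn : (0:ℝ) ≤ ‖g' - g‖ := norm_nonneg _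
    have ha1 : -⟪g, g' - g⟫ ≤ β * ρ * ‖g‖ ^ 2 := by
      have h2 := mul_le_mul_of_nonneg_left hδ hgn
      nlinarith [hcs.1]
    have hD2 : ‖g' - g‖ ^ 2 ≤ β ^ 2 * ρ ^ 2 * ‖g‖ ^ 2 := by
      have h3 := pow_le_pow_left₀ hδn hδ 2
      nlinarith [h3]
    nlinarith [hdesc,
      mul_nonneg (mul_nonneg hη.le (by linarith : (0:ℝ) ≤ 1 - β * η))
        (by linarith : (0:ℝ) ≤ β * ρ * ‖g‖ ^ 2 + ⟪g, g' - g⟫),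
      mul_nonneg (by positivity : (0:ℝ) ≤ β * η ^ 2 / 2)
        (by linarith : (0:ℝ) ≤ β ^ 2 * ρ ^ 2 * ‖g‖ ^ 2 - ‖g' - g‖ ^ 2),
      mul_nonneg (mul_nonneg (by positivity : (0:ℝ) ≤ β ^ 2 * η ^ 2 * ρ)
        (sq_nonneg ‖g‖)) (by linarith : (0:ℝ) ≤ 1 - β * ρ / 2)]
end

section
/- Under the setting of the mixed SAM/ERM full-batch descent (f β-smooth, ρ < 1/(2β), η < 1/β, w_{t+1} = w_t - η((1-ξ_t)∇f(w_t) + ξ_t ∇f(w_t + ρ∇f(w_t)))), we have min_{0≤t≤T-1} ||∇f(w_t)||² ≤ (f(w_0) - f(w_T)) / (Tη(1 - βη/2 - βρζ)), where ζ = (1/T)Σ_{t=0}^{T-1} ξ_t. -/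
open RealInnerProductSpace Finset

variable {d : ℕ}

lemma line_deriv (f : EuclideanSpace ℝ (Fin d) → ℝ)
    (f' : EuclideanSpace ℝ (Fin d) → EuclideanSpace ℝ (Fin d))
    (hgrad : ∀ w, HasGradientAt f (f' w) w)
    (x v : EuclideanSpace ℝ (Fin d)) (t : ℝ) :
    HasDerivAt (fun s : ℝ => f (x + s • v)) ⟪f' (x + t • v), v⟫ t := by
  have hc : HasDerivAt (fun s : ℝ => x + s • v) v t := by
    simpa using ((hasDerivAt_id t).smul_const v).const_add x
  have := ((hgrad (x + t • v)).hasFDerivAt).comp_hasDerivAt t hc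
  simp at this; exact this

lemma descent_lemma (f : EuclideanSpace ℝ (Fin d) → ℝ)
    (f' : EuclideanSpace ℝ (Fin d) → EuclideanSpace ℝ (Fin d))
    (hgrad : ∀ w, HasGradientAt f (f' w) w)
    (β : ℝ) (hβ : 0 < β)
    (hlip : ∀ w v, ‖f' w - f' v‖ ≤ β * ‖w - v‖)
    (x y : EuclideanSpace ℝ (Fin d)) :
    f y ≤ f x + ⟪f' x, y - x⟫ + β / 2 * ‖y - x‖ ^ 2 := by
  set v := y - x with hv
  set ψ : ℝ → ℝ := fun t => β * ‖v‖ ^ 2 * t ^ 2 / 2 - (f (x + t • v) - t * ⟪f' x, v⟫) with hψ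
  have hd : ∀ t : ℝ, HasDerivAt ψ
      (β * ‖v‖ ^ 2 * t - (⟪f' (x + t • v), v⟫ - ⟪f' x, v⟫)) t := by
    intro t
    have h1 := line_deriv f f' hgrad x v t
    have h2 : HasDerivAt (fun s : ℝ => β * ‖v‖ ^ 2 * s ^ 2 / 2)
        (β * ‖v‖ ^ 2 * t) t := by
      have := ((hasDerivAt_pow 2 t).const_mul (β * ‖v‖ ^ 2)).div_const 2
      refine this.congr_deriv ?_; ring
    have h3 : HasDerivAt (fun s : ℝ => s * ⟪f' x, v⟫) ⟪f' x, v⟫ t := by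
      simpa using (hasDerivAt_id t).mul_const (⟪f' x, v⟫)
    exact h2.sub (h1.sub h3)
  have hmono : MonotoneOn ψ (Set.Icc (0:ℝ) 1) := by
    apply monotoneOn_of_deriv_nonneg (convex_Icc 0 1)
    · exact (fun t _ => (hd t).differentiableAt.continuousAt.continuousWithinAt)
    · exact fun t _ => ((hd t).differentiableAt).differentiableWithinAt
    · intro t ht
      rw [interior_Icc] at ht
      rw [(hd t).deriv]
      have hb : ⟪f' (x + t • v), v⟫ - ⟪f' x, v⟫ ≤ β * ‖v‖ ^ 2 * t := by
        calc ⟪f' (x + t • v), v⟫ - ⟪f' x, v⟫ = ⟪f' (x + t • v) - f' x, v⟫ := by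
              rw [inner_sub_left]
          _ ≤ ‖f' (x + t • v) - f' x‖ * ‖v‖ := real_inner_le_norm _ _
          _ ≤ (β * ‖(x + t • v) - x‖) * ‖v‖ := by
              gcongr; exact hlip _ _
          _ = β * ‖v‖ ^ 2 * t := by
              have he : (x + t • v) - x = t • v := by module
              rw [he, norm_smul]
              simp only [Real.norm_eq_abs, abs_of_pos ht.1]
              ring
      set A : ℝ := ⟪f' (x + t • v), v⟫ with hA
      set B : ℝ := ⟪f' x, v⟫ with hB
      linarith
  have h01 := hmono (Set.mem_Icc.mpr ⟨le_refl 0, zero_le_one⟩)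
    (Set.mem_Icc.mpr ⟨zero_le_one, le_refl 1⟩) zero_le_one
  have hx1 : x + v = y := by simp [hv]
  have e0 : ψ 0 = -(f x) := by simp [hψ]
  have e1 : ψ 1 = β * ‖v‖ ^ 2 / 2 - (f y - ⟪f' x, v⟫) := by
    simp only [hψ, one_pow, one_smul, one_mul, mul_one, hx1]
  rw [e0, e1] at h01
  linarith

set_option maxHeartbeats 1000000 in
lemma step_lemma (f : EuclideanSpace ℝ (Fin d) → ℝ)
    (f' : EuclideanSpace ℝ (Fin d) → EuclideanSpace ℝ (Fin d))
    (hgrad : ∀ w, HasGradientAt f (f' w) w)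
    (β η ρ : ℝ) (hβ : 0 < β) (hη : 0 < η) (hρ : 0 < ρ)
    (hηβ : η < 1 / β) (hρβ : ρ < 1 / (2 * β))
    (hlip : ∀ w v, ‖f' w - f' v‖ ≤ β * ‖w - v‖)
    (w : ℕ → EuclideanSpace ℝ (Fin d)) (ξ : ℕ → ℝ)
    (hξ : ∀ t, ξ t = 0 ∨ ξ t = 1)
    (hupd : ∀ t, w (t + 1) =
      w t - η • ((1 - ξ t) • f' (w t) + ξ t • f' (w t + ρ • f' (w t))))
    (t : ℕ) :
    f (w (t + 1)) ≤ f (w t) - η * (1 - β * η / 2 - β * ρ * ξ t) * ‖f' (w t)‖ ^ 2 := by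
  have hβη : β * η < 1 := by
    rw [lt_div_iff₀ hβ] at hηβ; linarith
  have hβρ : β * ρ < 1 / 2 := by
    rw [lt_div_iff₀ (by positivity)] at hρβ; linarith
  set a := f' (w t) with ha
  set g := (1 - ξ t) • a + ξ t • f' (w t + ρ • a) with hg
  have hy : w (t + 1) - w t = -(η • g) := by rw [hupd t]; module
  have hdesc := descent_lemma f f' hgrad β hβ hlip (w t) (w (t + 1))
  rw [hy] at hdesc
  have hinner : ∀ u : EuclideanSpace ℝ (Fin d), (⟪u, -(η • g)⟫ : ℝ) = -(η * ⟪u, g⟫) := by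
    intro u; rw [inner_neg_right, real_inner_smul_right]
  have hnorm : ‖-(η • g)‖ ^ 2 = η ^ 2 * ‖g‖ ^ 2 := by
    rw [norm_neg, norm_smul, Real.norm_eq_abs, abs_of_pos hη, mul_pow]
  rw [hinner, hnorm] at hdesc
  rcases hξ t with h0 | h1
  · have hga : g = a := by simp [hg, h0]
    rw [hga, real_inner_self_eq_norm_sq] at hdesc
    rw [h0]
    nlinarith [hdesc, sq_nonneg ‖a‖]
  · have hga : g = a + (f' (w t + ρ • a) - a) := by simp [hg, h1]
    set e := f' (w t + ρ • a) - a with he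
    have hE : ‖e‖ ≤ β * ρ * ‖a‖ := by
      have := hlip (w t + ρ • a) (w t)
      have h2 : (w t + ρ • a) - w t = ρ • a := by module
      rw [h2, norm_smul, Real.norm_eq_abs, abs_of_pos hρ] at this
      rw [he, ha]; calc ‖f' (w t + ρ • f' (w t)) - f' (w t)‖ ≤ β * (ρ * ‖f' (w t)‖) := this
        _ = β * ρ * ‖f' (w t)‖ := by ring
    have hig : (⟪a, g⟫ : ℝ) = ‖a‖ ^ 2 + ⟪a, e⟫ := by
      rw [hga, inner_add_right, real_inner_self_eq_norm_sq]
    have hng : ‖g‖ ^ 2 = ‖a‖ ^ 2 + 2 * ⟪a, e⟫ + ‖e‖ ^ 2 := by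
      rw [hga]; exact norm_add_sq_real a e
    rw [hig, hng] at hdesc
    rw [h1]
    have hI : |(⟪a, e⟫ : ℝ)| ≤ ‖a‖ * ‖e‖ := abs_real_inner_le_norm a e
    have hI' : -(‖a‖ * ‖e‖) ≤ (⟪a, e⟫ : ℝ) := neg_le_of_abs_le hI
    have hna : (0:ℝ) ≤ ‖a‖ := norm_nonneg a
    have hne : (0:ℝ) ≤ ‖e‖ := norm_nonneg e
    have k1 : -(⟪a, e⟫ : ℝ) ≤ β * ρ * ‖a‖ ^ 2 := by
      have h3 := mul_le_mul_of_nonneg_left hE hna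
      have h4 : ‖a‖ * (β * ρ * ‖a‖) = β * ρ * ‖a‖ ^ 2 := by ring
      linarith [hI']
    have k2 : ‖e‖ ^ 2 ≤ β ^ 2 * ρ ^ 2 * ‖a‖ ^ 2 := by
      have h3 := pow_le_pow_left₀ hne hE 2
      calc ‖e‖ ^ 2 ≤ (β * ρ * ‖a‖) ^ 2 := h3
        _ = β ^ 2 * ρ ^ 2 * ‖a‖ ^ 2 := by ring
    have hA : (0:ℝ) ≤ ‖a‖ ^ 2 := sq_nonneg _
    have c1 : (0:ℝ) ≤ η * (1 - β * η) := mul_nonneg hη.le (by linarith)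
    have c2 : (0:ℝ) ≤ β * η ^ 2 / 2 := by positivity
    have m1 := mul_le_mul_of_nonneg_left k1 c1
    have m2 := mul_le_mul_of_nonneg_left k2 c2
    have m3 : β * η ^ 2 / 2 * (β ^ 2 * ρ ^ 2 * ‖a‖ ^ 2) + η * (1 - β * η) * (β * ρ * ‖a‖ ^ 2)
        ≤ η * (β * ρ * ‖a‖ ^ 2) := by
      have hq : (0:ℝ) ≤ β ^ 2 * η ^ 2 * ρ * ‖a‖ ^ 2 := by positivity
      linarith [mul_nonneg hq (by linarith : (0:ℝ) ≤ 1 - β * ρ / 2)]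
    linarith [hdesc, m1, m2, m3]

/-- Convergence of mixed SAM/ERM full-batch gradient descent. -/
theorem mixed_sam_erm_full_batch_convergence
    {d : ℕ} (f : EuclideanSpace ℝ (Fin d) → ℝ)
    (f' : EuclideanSpace ℝ (Fin d) → EuclideanSpace ℝ (Fin d))
    (hgrad : ∀ w, HasGradientAt f (f' w) w)
    (β η ρ : ℝ) (hβ : 0 < β) (hη : 0 < η) (hρ : 0 < ρ)
    (hηβ : η < 1 / β) (hρβ : ρ < 1 / (2 * β))
    (hlip : ∀ w v, ‖f' w - f' v‖ ≤ β * ‖w - v‖)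
    (w : ℕ → EuclideanSpace ℝ (Fin d)) (ξ : ℕ → ℝ)
    (hξ : ∀ t, ξ t = 0 ∨ ξ t = 1)
    (hupd : ∀ t, w (t + 1) =
      w t - η • ((1 - ξ t) • f' (w t) + ξ t • f' (w t + ρ • f' (w t))))
    (T : ℕ) (hT : 0 < T) :
    (range T).inf' (nonempty_range_iff.mpr hT.ne') (fun t => ‖f' (w t)‖ ^ 2)
      ≤ (f (w 0) - f (w T)) /
        (T * η * (1 - β * η / 2 - β * ρ * ((∑ t ∈ range T, ξ t) / T))) := by
  have hβη : β * η < 1 := by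
    rw [lt_div_iff₀ hβ] at hηβ; linarith
  have hβρ : β * ρ < 1 / 2 := by
    rw [lt_div_iff₀ (by positivity)] at hρβ; linarith
  set m := (range T).inf' (nonempty_range_iff.mpr hT.ne') (fun t => ‖f' (w t)‖ ^ 2) with hm
  set c : ℕ → ℝ := fun t => 1 - β * η / 2 - β * ρ * ξ t with hc
  have hcpos : ∀ t, 0 < c t := by
    intro t
    rcases hξ t with h | h <;> simp only [hc, h] <;> nlinarith [hρ, hβ]
  have hmle : ∀ t ∈ range T, m ≤ ‖f' (w t)‖ ^ 2 := fun t ht => inf'_le _ ht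
  have hm0 : 0 ≤ m := by
    obtain ⟨t0, _, h⟩ := exists_mem_eq_inf' (nonempty_range_iff.mpr hT.ne')
      (fun t => ‖f' (w t)‖ ^ 2)
    rw [hm, h]; positivity
  have hstep : ∀ t, η * c t * ‖f' (w t)‖ ^ 2 ≤ f (w t) - f (w (t + 1)) := by
    intro t
    have := step_lemma f f' hgrad β η ρ hβ hη hρ hηβ hρβ hlip w ξ hξ hupd t
    simp only [hc]; linarith
  have htel : ∑ t ∈ range T, (f (w t) - f (w (t + 1))) = f (w 0) - f (w T) :=
    Finset.sum_range_sub' (fun t => f (w t)) T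
  have hsum1 : ∑ t ∈ range T, η * c t * ‖f' (w t)‖ ^ 2 ≤ f (w 0) - f (w T) := by
    rw [← htel]; exact Finset.sum_le_sum fun t _ => hstep t
  have hsum2 : ∑ t ∈ range T, η * c t * m ≤ ∑ t ∈ range T, η * c t * ‖f' (w t)‖ ^ 2 :=
    Finset.sum_le_sum fun t ht => by
      have := hmle t ht
      have h1 : 0 ≤ η * c t := mul_nonneg hη.le (hcpos t).le
      exact mul_le_mul_of_nonneg_left this h1
  have hsc : ∑ t ∈ range T, η * c t * m = m * (η * ∑ t ∈ range T, c t) := by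
    rw [Finset.mul_sum, Finset.mul_sum]
    exact Finset.sum_congr rfl fun t _ => by ring
  set D := (T : ℝ) * η * (1 - β * η / 2 - β * ρ * ((∑ t ∈ range T, ξ t) / T)) with hD
  have hTne : (T : ℝ) ≠ 0 := Nat.cast_ne_zero.mpr hT.ne'
  have hDe : D = η * ∑ t ∈ range T, c t := by
    simp only [hD, hc, Finset.sum_sub_distrib, Finset.sum_const, Finset.card_range,
      ← Finset.mul_sum]
    field_simp
    ring
  have hDpos : 0 < D := by
    rw [hDe]
    exact mul_pos hη (Finset.sum_pos (fun t _ => hcpos t) (nonempty_range_iff.mpr hT.ne'))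
  rw [le_div_iff₀ hDpos]
  calc m * D = ∑ t ∈ range T, η * c t * m := by rw [hsc, hDe]
    _ ≤ f (w 0) - f (w T) := le_trans hsum2 hsum1
end
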